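/- Let V ∈ ℂ^d be an eigenvector of Q, QV = μV with |μ| = ρ ≥ 0, let S_K be the running sum associated with C = V, and assume hypothesis (jsr_λ). If ρ < λ then sup_{x∈[0,1]} ‖S_K(x)‖ = O(λ^K) as K → ∞; if ρ = λ then sup_{x∈[0,1]} ‖S_K(x)‖ = O(K λ^K) as K → ∞. -/

import Mathlib

open scoped Classical BigOperators
open Filter Asymptotics

attribute [local instance] Matrix.linftyOpNormedAddCommGroup Matrix.linftyOpNormedRing

noncomputable section

/-- `A_w = A_{w_1} ⋯ A_{w_K}` for a word `w` of length `K` over the digit alphabet. -/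
def wordProd {B d : ℕ} (A : Fin B → Matrix (Fin d) (Fin d) ℂ) {K : ℕ}
    (w : Fin K → Fin B) : Matrix (Fin d) (Fin d) ℂ :=
  ((List.ofFn w).map A).prod

/-- `(0.w)_B = Σ_{k=1}^K w_k B^{-k}`. -/
def wordVal {B K : ℕ} (w : Fin K → Fin B) : ℝ :=
  ∑ k : Fin K, (w k : ℝ) / (B : ℝ) ^ ((k : ℕ) + 1)

/-- The running sum `S_K(x) = Σ_{|w|=K, (0.w)_B ≤ x} A_w C`. -/
def runSum {B d : ℕ} (A : Fin B → Matrix (Fin d) (Fin d) ℂ) (C : Fin d → ℂ)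
    (K : ℕ) (x : ℝ) : Fin d → ℂ :=
  ∑ w : Fin K → Fin B, if wordVal w ≤ x then (wordProd A w).mulVec C else 0

/-- The basic dilation equation for data `ρ, ω, V`. -/
def DilationEq {B d : ℕ} (A : Fin B → Matrix (Fin d) (Fin d) ℂ) (ρ : ℝ) (ω : ℂ)
    (V : Fin d → ℂ) (Φ : ℝ → Fin d → ℂ) : Prop :=
  Φ 0 = 0 ∧ Φ 1 = V ∧
    ∀ r : Fin B, ∀ x : ℝ, (r : ℝ) / B ≤ x → x < ((r : ℝ) + 1) / B →
      Φ x = ((ρ : ℂ) * ω)⁻¹ •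
        ((∑ s ∈ Finset.univ.filter fun s : Fin B => s < r, (A s).mulVec V) +
          (A r).mulVec (Φ (B * x - r)))

section Helpers

variable {B d : ℕ} (A : Fin B → Matrix (Fin d) (Fin d) ℂ)

lemma wordProd_nil (w : Fin 0 → Fin B) : wordProd A w = 1 := by simp [wordProd]

lemma wordProd_cons {K : ℕ} (r : Fin B) (v : Fin K → Fin B) :
    wordProd A (Fin.cons r v) = A r * wordProd A v := by
  simp [wordProd, List.ofFn_succ]

lemma wordProd_snoc {K : ℕ} (u : Fin K → Fin B) (r : Fin B) :
    wordProd A (Fin.snoc u r) = wordProd A u * A r := by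
  rw [wordProd, wordProd, List.ofFn_succ']
  simp [List.map_concat, List.prod_concat]

lemma wordVal_nonneg {K : ℕ} (w : Fin K → Fin B) : 0 ≤ wordVal w :=
  Finset.sum_nonneg fun k _ => by positivity

lemma wordVal_cons (hB : 0 < B) {K : ℕ} (r : Fin B) (v : Fin K → Fin B) :
    wordVal (Fin.cons r v) = ((r : ℝ) + wordVal v) / B := by
  have hBne : (B : ℝ) ≠ 0 := Nat.cast_ne_zero.mpr hB.ne'
  rw [wordVal, wordVal, Fin.sum_univ_succ, add_div, Finset.sum_div]
  congr 1
  · simp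
  refine Finset.sum_congr rfl fun k _ => ?_
  rw [Fin.cons_succ, div_div, ← pow_succ]
  congr 1

lemma wordVal_le_one (hB : 0 < B) : ∀ {K : ℕ} (w : Fin K → Fin B), wordVal w ≤ 1 := by
  intro K
  induction K with
  | zero => intro w; simp [wordVal]
  | succ K ih =>
    intro w
    have hBR : (0:ℝ) < B := by exact_mod_cast hB
    rw [← Fin.cons_self_tail w, wordVal_cons hB]
    have h1 : (w 0 : ℝ) + 1 ≤ (B : ℝ) := by
      have h : (w 0 : ℕ) + 1 ≤ B := (w 0).isLt
      exact_mod_cast h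
    have h2 := ih (Fin.tail w)
    rw [div_le_one hBR]
    linarith


section Helpers2

variable {B d : ℕ} (A : Fin B → Matrix (Fin d) (Fin d) ℂ)

lemma mulVecSum {ι : Type*} (s : Finset ι) (M : Matrix (Fin d) (Fin d) ℂ)
    (f : ι → Fin d → ℂ) : M.mulVec (∑ i ∈ s, f i) = ∑ i ∈ s, M.mulVec (f i) := by
  ext j
  simp only [Matrix.mulVec, dotProduct, Finset.sum_apply, Finset.mul_sum]
  rw [Finset.sum_comm]

lemma sumMulVec {ι : Type*} (s : Finset ι) (f : ι → Matrix (Fin d) (Fin d) ℂ)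
    (v : Fin d → ℂ) : (∑ i ∈ s, f i).mulVec v = ∑ i ∈ s, (f i).mulVec v := by
  ext j
  simp only [Matrix.mulVec, dotProduct, Finset.sum_apply, Matrix.sum_apply,
    Finset.sum_mul]
  rw [Finset.sum_comm]

lemma runSum_succ (hB : 0 < B) (V : Fin d → ℂ) (K : ℕ) (x : ℝ) :
    runSum A V (K + 1) x
      = ∑ r : Fin B, (A r).mulVec (runSum A V K ((B : ℝ) * x - (r : ℝ))) := by
  have hBR : (0:ℝ) < B := by exact_mod_cast hB
  rw [runSum]
  rw [← Equiv.sum_comp (Fin.consEquiv fun _ : Fin (K+1) => Fin B)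
    (fun w => if wordVal w ≤ x then (wordProd A w).mulVec V else 0)]
  rw [Fintype.sum_prod_type]
  refine Finset.sum_congr rfl fun r _ => ?_
  rw [runSum, mulVecSum]
  refine Finset.sum_congr rfl fun v _ => ?_
  have hcond : wordVal (Fin.cons r v) ≤ x ↔ wordVal v ≤ (B:ℝ) * x - r := by
    rw [wordVal_cons hB, div_le_iff₀ hBR]
    constructor <;> intro h <;> nlinarith
  have hprod : wordProd A (Fin.cons r v) = A r * wordProd A v := wordProd_cons A r v
  show (if wordVal ((Fin.consEquiv fun _ : Fin (K+1) => Fin B) (r, v)) ≤ x then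
      (wordProd A ((Fin.consEquiv fun _ : Fin (K+1) => Fin B) (r, v))).mulVec V else 0)
    = (A r).mulVec (if wordVal v ≤ (B:ℝ)*x - r then (wordProd A v).mulVec V else 0)
  have he : (Fin.consEquiv fun _ : Fin (K+1) => Fin B) (r, v) = Fin.cons r v := rfl
  rw [he, hprod]
  by_cases h : wordVal v ≤ (B:ℝ)*x - r
  · rw [if_pos (hcond.mpr h), if_pos h, ← Matrix.mulVec_mulVec]
  · rw [if_neg (fun hc => h (hcond.mp hc)), if_neg h, Matrix.mulVec_zero]

lemma sum_wordProd : ∀ K : ℕ, ∑ w : Fin K → Fin B, wordProd A w = (∑ r, A r) ^ K := by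
  intro K
  induction K with
  | zero => simp [wordProd]
  | succ K ih =>
    rw [← Equiv.sum_comp (Fin.consEquiv fun _ : Fin (K+1) => Fin B) (fun w => wordProd A w),
      Fintype.sum_prod_type]
    have : ∀ r : Fin B, ∑ v : Fin K → Fin B,
        wordProd A ((Fin.consEquiv fun _ : Fin (K+1) => Fin B) (r, v))
        = A r * (∑ r, A r) ^ K := by
      intro r
      rw [← ih, Finset.mul_sum]
      exact Finset.sum_congr rfl fun v _ => wordProd_cons A r v
    rw [Finset.sum_congr rfl fun r _ => this r, ← Finset.sum_mul, pow_succ']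

lemma pow_mulVec_eig (V : Fin d → ℂ) (μ : ℂ) (hV : (∑ r, A r).mulVec V = μ • V) :
    ∀ K : ℕ, ((∑ r, A r) ^ K).mulVec V = μ ^ K • V := by
  intro K
  induction K with
  | zero => simp [Matrix.one_mulVec]
  | succ K ih =>
    rw [pow_succ, ← Matrix.mulVec_mulVec, hV, Matrix.mulVec_smul, ih, smul_smul, ← pow_succ']

lemma runSum_of_one_le (hB : 0 < B) (V : Fin d → ℂ) (μ : ℂ)
    (hV : (∑ r, A r).mulVec V = μ • V) (K : ℕ) (x : ℝ) (hx : 1 ≤ x) :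
    runSum A V K x = μ ^ K • V := by
  rw [runSum]
  have : ∀ w : Fin K → Fin B,
      (if wordVal w ≤ x then (wordProd A w).mulVec V else 0) = (wordProd A w).mulVec V := by
    intro w
    exact if_pos ((wordVal_le_one hB w).trans hx)
  rw [Finset.sum_congr rfl fun w _ => this w, ← sumMulVec, sum_wordProd, pow_mulVec_eig A V μ hV]

lemma runSum_of_neg (V : Fin d → ℂ) (K : ℕ) (x : ℝ) (hx : x < 0) :
    runSum A V K x = 0 := by
  rw [runSum]
  refine Finset.sum_eq_zero fun w _ => ?_
  exact if_neg (fun h => absurd (h.trans_lt hx) (not_lt.mpr (wordVal_nonneg w)))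

lemma norm_wordProd_le (hd : 1 ≤ d) (lam : ℝ) (hlam : 0 < lam) (T : ℕ) (hT : 1 ≤ T)
    (hjsr : ∀ w : Fin T → Fin B, ‖wordProd A w‖ ≤ lam ^ T) :
    ∃ C₀ : ℝ, 1 ≤ C₀ ∧ ∀ (K : ℕ) (w : Fin K → Fin B), ‖wordProd A w‖ ≤ C₀ * lam ^ K := by
  haveI : Nonempty (Fin d) := ⟨⟨0, hd⟩⟩
  set M : ℝ := 1 + ∑ r : Fin B, ‖A r‖ with hM
  have hM1 : 1 ≤ M := le_add_of_nonneg_right (Finset.sum_nonneg fun r _ => norm_nonneg _)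
  have hMr : ∀ r : Fin B, ‖A r‖ ≤ M := by
    intro r
    have h := Finset.single_le_sum (f := fun r : Fin B => ‖A r‖)
      (fun r _ => norm_nonneg _) (Finset.mem_univ r)
    simp only [hM]
    linarith
  have hlist : ∀ l : List (Fin B), ‖(l.map A).prod‖ ≤ M ^ l.length := by
    intro l; induction l with
    | nil => simpa using norm_one.le
    | cons a l ih =>
      rw [List.map_cons, List.prod_cons, List.length_cons, pow_succ']
      calc ‖A a * (l.map A).prod‖ ≤ ‖A a‖ * ‖(l.map A).prod‖ := norm_mul_le _ _
        _ ≤ M * M ^ l.length :=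
          mul_le_mul (hMr a) ih (norm_nonneg _) (le_trans zero_le_one hM1)
  have hjsr' : ∀ l : List (Fin B), l.length = T → ‖(l.map A).prod‖ ≤ lam ^ T := by
    intro l hl
    have h := hjsr (fun i => l.get (Fin.cast hl.symm i))
    rw [wordProd] at h
    have heq : List.ofFn (fun i : Fin T => l.get (Fin.cast hl.symm i)) = l := by
      subst hl
      simpa using List.ofFn_get l
    rw [heq] at h
    exact h
  set v : ℝ := max 1 (M / lam) with hv
  have hv1 : 1 ≤ v := le_max_left _ _
  have hMv : M ≤ v * lam := by
    have h1 : M / lam ≤ v := le_max_right _ _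
    have := mul_le_mul_of_nonneg_right h1 hlam.le
    rwa [div_mul_cancel₀ _ hlam.ne'] at this
  refine ⟨v ^ T, one_le_pow₀ hv1, ?_⟩
  have main : ∀ K, ∀ l : List (Fin B), l.length = K → ‖(l.map A).prod‖ ≤ v ^ T * lam ^ K := by
    intro K
    induction K using Nat.strong_induction_on with
    | _ K ih =>
      intro l hl
      by_cases hKT : K < T
      · calc ‖(l.map A).prod‖ ≤ M ^ K := hl ▸ hlist l
          _ ≤ (v * lam) ^ K := pow_le_pow_left₀ (by linarith) hMv K
          _ = v ^ K * lam ^ K := mul_pow _ _ _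
          _ ≤ v ^ T * lam ^ K := by
            have h2 : v ^ K ≤ v ^ T := pow_le_pow_right₀ hv1 hKT.le
            have h3 : (0:ℝ) < lam ^ K := pow_pos hlam K
            nlinarith
      · push_neg at hKT
        have hlen1 : (l.take T).length = T := by
          rw [List.length_take, hl]; omega
        have hlen2 : (l.drop T).length = K - T := by rw [List.length_drop, hl]
        have hKTlt : K - T < K := Nat.sub_lt (by omega) (by omega)
        calc ‖(l.map A).prod‖ = ‖((l.take T).map A).prod * ((l.drop T).map A).prod‖ := by
              conv_lhs => rw [← List.take_append_drop T l]
              rw [List.map_append, List.prod_append]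
          _ ≤ ‖((l.take T).map A).prod‖ * ‖((l.drop T).map A).prod‖ := norm_mul_le _ _
          _ ≤ lam ^ T * (v ^ T * lam ^ (K - T)) :=
            mul_le_mul (hjsr' _ hlen1) (ih (K - T) hKTlt _ hlen2) (norm_nonneg _)
              (by positivity)
          _ = v ^ T * lam ^ K := by
            rw [mul_comm (lam ^ T), mul_assoc, ← pow_add]
            congr 2
            omega
  intro K w
  have h := main K (List.ofFn w) (by simp)
  rw [wordProd]
  exact h

lemma key_bound (hB : 0 < B) (V : Fin d → ℂ) (μ : ℂ) (ρ : ℝ) (hρ : ‖μ‖ = ρ)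
    (hV : (∑ r, A r).mulVec V = μ • V) (lam C₀ : ℝ) (hlam : 0 < lam) (hC₀ : 1 ≤ C₀)
    (hg : ∀ (K : ℕ) (w : Fin K → Fin B), ‖wordProd A w‖ ≤ C₀ * lam ^ K) :
    ∀ (K j : ℕ) (u : Fin j → Fin B) (x : ℝ),
      ‖(wordProd A u).mulVec (runSum A V K x)‖ ≤
        (∑ i ∈ Finset.range K, C₀ * lam ^ (j + 1 + i) * ρ ^ (K - 1 - i)) * ((B : ℝ) * ‖V‖)
          + C₀ * lam ^ (j + K) * ‖V‖ := by
  have hρ0 : 0 ≤ ρ := hρ ▸ norm_nonneg μ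
  have hBR : (0:ℝ) < B := by exact_mod_cast hB
  have hC₀0 : (0:ℝ) ≤ C₀ := by linarith
  have htermnn : ∀ a b : ℕ, (0:ℝ) ≤ C₀ * lam ^ a * ρ ^ b := fun a b =>
    mul_nonneg (mul_nonneg hC₀0 (pow_nonneg hlam.le a)) (pow_nonneg hρ0 b)
  have hRHSnn : ∀ (K j : ℕ), (0:ℝ) ≤
      (∑ i ∈ Finset.range K, C₀ * lam ^ (j + 1 + i) * ρ ^ (K - 1 - i)) * ((B : ℝ) * ‖V‖)
        + C₀ * lam ^ (j + K) * ‖V‖ := by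
    intro K j
    have h1 : (0:ℝ) ≤ ∑ i ∈ Finset.range K, C₀ * lam ^ (j + 1 + i) * ρ ^ (K - 1 - i) :=
      Finset.sum_nonneg fun i _ => htermnn _ _
    have h2 : (0:ℝ) ≤ (B : ℝ) * ‖V‖ := mul_nonneg hBR.le (norm_nonneg _)
    have h3 : (0:ℝ) ≤ C₀ * lam ^ (j + K) * ‖V‖ :=
      mul_nonneg (mul_nonneg hC₀0 (pow_nonneg hlam.le _)) (norm_nonneg _)
    nlinarith
  -- norm of a single "full" term
  have hfull : ∀ (K j : ℕ) (u : Fin j → Fin B) (r : Fin B) (y : ℝ), 1 ≤ y →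
      ‖(wordProd A (Fin.snoc u r)).mulVec (runSum A V K y)‖ ≤
        C₀ * lam ^ (j + 1) * ρ ^ K * ‖V‖ := by
    intro K j u r y hy
    rw [runSum_of_one_le A hB V μ hV K y hy, Matrix.mulVec_smul, norm_smul, norm_pow, hρ]
    have h1 : ‖(wordProd A (Fin.snoc u r)).mulVec V‖ ≤ C₀ * lam ^ (j + 1) * ‖V‖ :=
      le_trans (Matrix.linfty_opNorm_mulVec _ _)
        (mul_le_mul_of_nonneg_right (hg _ _) (norm_nonneg V))
    have h2 : (0:ℝ) ≤ ρ ^ K := pow_nonneg hρ0 K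
    calc ρ ^ K * ‖(wordProd A (Fin.snoc u r)).mulVec V‖
        ≤ ρ ^ K * (C₀ * lam ^ (j + 1) * ‖V‖) := mul_le_mul_of_nonneg_left h1 h2
      _ = C₀ * lam ^ (j + 1) * ρ ^ K * ‖V‖ := by ring
  intro K
  induction K with
  | zero =>
    intro j u x
    have h0 : runSum A V 0 x = if (0:ℝ) ≤ x then V else 0 := by
      rw [runSum, Fintype.sum_unique]
      simp [wordVal, wordProd, Matrix.one_mulVec]
    rw [h0]
    simp only [Finset.range_zero, Finset.sum_empty, zero_mul, zero_add, Nat.add_zero]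
    by_cases hx : (0:ℝ) ≤ x
    · rw [if_pos hx]
      calc ‖(wordProd A u).mulVec V‖ ≤ ‖wordProd A u‖ * ‖V‖ :=
            Matrix.linfty_opNorm_mulVec _ _
        _ ≤ C₀ * lam ^ j * ‖V‖ := mul_le_mul_of_nonneg_right (hg j u) (norm_nonneg V)
    · rw [if_neg hx, Matrix.mulVec_zero, norm_zero]
      exact mul_nonneg (mul_nonneg hC₀0 (pow_nonneg hlam.le _)) (norm_nonneg _)
  | succ K IH =>
    intro j u x
    rw [runSum_succ A hB V K x, mulVecSum]
    have hterm : ∀ r : Fin B,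
        (wordProd A u).mulVec ((A r).mulVec (runSum A V K ((B:ℝ) * x - (r:ℝ))))
          = (wordProd A (Fin.snoc u r)).mulVec (runSum A V K ((B:ℝ) * x - (r:ℝ))) := by
      intro r
      rw [Matrix.mulVec_mulVec, wordProd_snoc]
    simp only [hterm]
    set Full : ℝ := C₀ * lam ^ (j + 1) * ρ ^ K * ‖V‖ with hFull
    have hFullnn : 0 ≤ Full := mul_nonneg (htermnn _ _) (norm_nonneg _)
    have hnorm := norm_sum_le Finset.univ
      (fun r : Fin B => (wordProd A (Fin.snoc u r)).mulVec (runSum A V K ((B:ℝ) * x - (r:ℝ))))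
    refine le_trans hnorm ?_
    -- rewrite RHS of the goal using sum_range_succ'
    have hsplit : (∑ i ∈ Finset.range (K + 1), C₀ * lam ^ (j + 1 + i) * ρ ^ (K + 1 - 1 - i))
          * ((B : ℝ) * ‖V‖) + C₀ * lam ^ (j + (K + 1)) * ‖V‖
        = (B : ℝ) * Full +
          ((∑ i ∈ Finset.range K, C₀ * lam ^ (j + 1 + 1 + i) * ρ ^ (K - 1 - i))
            * ((B : ℝ) * ‖V‖) + C₀ * lam ^ (j + 1 + K) * ‖V‖) := by
      rw [Finset.sum_range_succ' (fun i => C₀ * lam ^ (j + 1 + i) * ρ ^ (K + 1 - 1 - i)) K]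
      have e1 : ∀ i : ℕ, j + 1 + (i + 1) = j + 1 + 1 + i := fun i => by omega
      have e2 : ∀ i : ℕ, K + 1 - 1 - (i + 1) = K - 1 - i := fun i => by omega
      have e3 : j + (K + 1) = j + 1 + K := by omega
      have es : (∑ i ∈ Finset.range K, C₀ * lam ^ (j + 1 + (i + 1)) * ρ ^ (K + 1 - 1 - (i + 1)))
          = ∑ i ∈ Finset.range K, C₀ * lam ^ (j + 1 + 1 + i) * ρ ^ (K - 1 - i) :=
        Finset.sum_congr rfl fun i _ => by rw [e1, e2]
      rw [es, e3]
      have e4 : K + 1 - 1 - 0 = K := by omega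
      have e5 : j + 1 + 0 = j + 1 := by omega
      rw [e4, e5]
      ring
    rw [hsplit]
    rcases lt_or_ge x 0 with hx | hx
    · -- all terms vanish
      have hz : ∀ r : Fin B, runSum A V K ((B:ℝ) * x - (r:ℝ)) = 0 := by
        intro r
        refine runSum_of_neg A V K _ ?_
        have : (B:ℝ) * x < 0 := mul_neg_of_pos_of_neg hBR hx
        have hr0 : (0:ℝ) ≤ (r:ℝ) := by positivity
        linarith
      have : ∀ r : Fin B, ‖(wordProd A (Fin.snoc u r)).mulVec (runSum A V K ((B:ℝ) * x - (r:ℝ)))‖ = 0 := by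
        intro r; rw [hz r, Matrix.mulVec_zero, norm_zero]
      rw [Finset.sum_congr rfl fun r _ => this r, Finset.sum_const, smul_zero]
      have := hRHSnn K (j + 1)
      have hBF : 0 ≤ (B:ℝ) * Full := mul_nonneg hBR.le hFullnn
      linarith
    rcases lt_or_ge x 1 with hx1 | hx1
    · -- main case : 0 ≤ x < 1
      have hBx0 : (0:ℝ) ≤ (B:ℝ) * x := mul_nonneg hBR.le hx
      have hr₀B : ⌊(B:ℝ) * x⌋₊ < B := by
        rw [Nat.floor_lt hBx0]
        calc (B:ℝ) * x < (B:ℝ) * 1 := by nlinarith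
          _ = B := mul_one _
      set R₀ : Fin B := ⟨⌊(B:ℝ) * x⌋₊, hr₀B⟩ with hR₀
      rw [← Finset.sum_erase_add Finset.univ _ (Finset.mem_univ R₀)]
      have houter : ∀ r ∈ Finset.univ.erase R₀,
          ‖(wordProd A (Fin.snoc u r)).mulVec (runSum A V K ((B:ℝ) * x - (r:ℝ)))‖ ≤ Full := by
        intro r hr
        have hne : r ≠ R₀ := Finset.ne_of_mem_erase hr
        rcases lt_or_gt_of_ne (fun h : (r:ℕ) = (R₀:ℕ) => hne (Fin.ext h)) with hlt | hgt
        · -- r < r₀ : full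
          have h1 : ((r:ℕ):ℝ) + 1 ≤ (⌊(B:ℝ) * x⌋₊ : ℝ) := by exact_mod_cast hlt
          have h2 : (⌊(B:ℝ) * x⌋₊ : ℝ) ≤ (B:ℝ) * x := Nat.floor_le hBx0
          exact hfull K j u r _ (by linarith)
        · -- r > r₀ : zero
          have h1 : (B:ℝ) * x < (⌊(B:ℝ) * x⌋₊ : ℝ) + 1 := Nat.lt_floor_add_one _
          have h2 : (⌊(B:ℝ) * x⌋₊ : ℝ) + 1 ≤ ((r:ℕ):ℝ) := by exact_mod_cast hgt
          have hz : runSum A V K ((B:ℝ) * x - (r:ℝ)) = 0 :=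
            runSum_of_neg A V K _ (by linarith)
          rw [hz, Matrix.mulVec_zero, norm_zero]
          exact hFullnn
      have hsum1 : ∑ r ∈ Finset.univ.erase R₀,
          ‖(wordProd A (Fin.snoc u r)).mulVec (runSum A V K ((B:ℝ) * x - (r:ℝ)))‖
            ≤ (B:ℝ) * Full := by
        calc ∑ r ∈ Finset.univ.erase R₀,
            ‖(wordProd A (Fin.snoc u r)).mulVec (runSum A V K ((B:ℝ) * x - (r:ℝ)))‖
            ≤ ∑ _r ∈ Finset.univ.erase R₀, Full := Finset.sum_le_sum houter
          _ = ((Finset.univ.erase R₀).card : ℝ) * Full := by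
              rw [Finset.sum_const, nsmul_eq_mul]
          _ ≤ (B:ℝ) * Full := by
              refine mul_le_mul_of_nonneg_right ?_ hFullnn
              have : (Finset.univ.erase R₀).card ≤ B := by
                calc (Finset.univ.erase R₀).card ≤ Finset.univ.card := Finset.card_erase_le
                  _ = B := by simp
              exact_mod_cast this
      have hsum2 := IH (j + 1) (Fin.snoc u R₀) ((B:ℝ) * x - (R₀:ℝ))
      exact add_le_add hsum1 hsum2
    · -- x ≥ 1 : all full
      have hall : ∀ r ∈ Finset.univ,
          ‖(wordProd A (Fin.snoc u r)).mulVec (runSum A V K ((B:ℝ) * x - (r:ℝ)))‖ ≤ Full := by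
        intro r _
        refine hfull K j u r _ ?_
        have h1 : ((r:ℕ):ℝ) + 1 ≤ (B:ℝ) := by exact_mod_cast r.isLt
        nlinarith
      calc (∑ r : Fin B, ‖(wordProd A (Fin.snoc u r)).mulVec (runSum A V K ((B:ℝ) * x - (r:ℝ)))‖)
          ≤ ∑ _r : Fin B, Full := Finset.sum_le_sum hall
        _ = (B:ℝ) * Full := by rw [Finset.sum_const, nsmul_eq_mul]; simp
        _ ≤ (B:ℝ) * Full +
            ((∑ i ∈ Finset.range K, C₀ * lam ^ (j + 1 + 1 + i) * ρ ^ (K - 1 - i))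
              * ((B : ℝ) * ‖V‖) + C₀ * lam ^ (j + 1 + K) * ‖V‖) := by
            have := hRHSnn K (j + 1)
            linarith

end Helpers2

/-- noise, eigenvector case: if `QV = μV` with `|μ| = ρ` and (jsr_λ) holds,
then the running sums associated with `V` are `O(λ^K)` if `ρ < λ` and `O(K λ^K)` if `ρ = λ`. -/
theorem runSum_noise_eigenvector (B d : ℕ) (hB : 2 ≤ B) (hd : 1 ≤ d)
    (A : Fin B → Matrix (Fin d) (Fin d) ℂ)
    (μ : ℂ) (ρ : ℝ) (hρ : ‖μ‖ = ρ)
    (V : Fin d → ℂ) (hVne : V ≠ 0) (hV : (∑ r, A r).mulVec V = μ • V)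
    -- hypothesis (jsr_λ)
    (lam : ℝ) (hlam : 0 < lam)
    (hjsr : ∃ T : ℕ, 1 ≤ T ∧ ∀ w : Fin T → Fin B, ‖wordProd A w‖ ≤ lam ^ T) :
    (ρ < lam →
      (fun K : ℕ => ⨆ x : Set.Icc (0:ℝ) 1, ‖runSum A V K x‖) =O[atTop]
        fun K => lam ^ K) ∧
    (ρ = lam →
      (fun K : ℕ => ⨆ x : Set.Icc (0:ℝ) 1, ‖runSum A V K x‖) =O[atTop]
        fun K => (K : ℝ) * lam ^ K) := by
  obtain ⟨T, hT, hjsrT⟩ := hjsr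
  have hB0 : 0 < B := by omega
  have hBR : (0:ℝ) < B := by exact_mod_cast hB0
  obtain ⟨C₀, hC₀, hg⟩ := norm_wordProd_le A hd lam hlam T hT hjsrT
  have hC₀0 : (0:ℝ) ≤ C₀ := by linarith
  have hρ0 : 0 ≤ ρ := hρ ▸ norm_nonneg μ
  have key := key_bound A hB0 V μ ρ hρ hV lam C₀ hlam hC₀ hg
  have hsup : ∀ K : ℕ, (⨆ x : Set.Icc (0:ℝ) 1, ‖runSum A V K x‖) ≤
      (∑ i ∈ Finset.range K, C₀ * lam ^ (1 + i) * ρ ^ (K - 1 - i)) * ((B:ℝ) * ‖V‖)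
        + C₀ * lam ^ K * ‖V‖ := by
    intro K
    refine ciSup_le fun x => ?_
    have h := key K 0 (fun i => i.elim0) (x : ℝ)
    rw [wordProd_nil, Matrix.one_mulVec] at h
    simpa using h
  have hsup0 : ∀ K : ℕ, 0 ≤ (⨆ x : Set.Icc (0:ℝ) 1, ‖runSum A V K x‖) := fun K =>
    Real.iSup_nonneg fun x => norm_nonneg _
  constructor
  · intro hlt
    set q : ℝ := ρ / lam with hq
    have hq0 : 0 ≤ q := div_nonneg hρ0 hlam.le
    have hq1 : q < 1 := (div_lt_one hlam).mpr hlt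
    have h1mq : 0 < 1 - q := by linarith
    have hgeom : ∀ K : ℕ, (∑ m ∈ Finset.range K, q ^ m) ≤ 1 / (1 - q) := by
      intro K
      rw [geom_sum_eq (by linarith : q ≠ 1)]
      have heq : (q ^ K - 1) / (q - 1) = (1 - q ^ K) / (1 - q) := by
        rw [div_eq_div_iff (by linarith) (by linarith)]
        ring
      rw [heq]
      have hqK : 0 ≤ q ^ K := pow_nonneg hq0 K
      gcongr
      linarith
    have hρq : ρ = lam * q := by rw [hq, mul_div_assoc', mul_div_cancel_left₀ ρ hlam.ne']
    have hsum_bound : ∀ K : ℕ, (∑ i ∈ Finset.range K, C₀ * lam ^ (1 + i) * ρ ^ (K - 1 - i))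
        ≤ C₀ * lam ^ K * (1 / (1 - q)) := by
      intro K
      have hterm : ∀ i ∈ Finset.range K, C₀ * lam ^ (1 + i) * ρ ^ (K - 1 - i)
          = C₀ * lam ^ K * q ^ (K - 1 - i) := by
        intro i hi
        have hiK : i < K := Finset.mem_range.mp hi
        have e : 1 + i + (K - 1 - i) = K := by omega
        calc C₀ * lam ^ (1 + i) * ρ ^ (K - 1 - i)
            = C₀ * (lam ^ (1 + i) * lam ^ (K - 1 - i)) * q ^ (K - 1 - i) := by
              rw [hρq, mul_pow]; ring
          _ = C₀ * lam ^ K * q ^ (K - 1 - i) := by rw [← pow_add, e]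
      rw [Finset.sum_congr rfl hterm, ← Finset.mul_sum]
      have hrefl : (∑ i ∈ Finset.range K, q ^ (K - 1 - i)) = ∑ i ∈ Finset.range K, q ^ i :=
        Finset.sum_range_reflect (fun i => q ^ i) K
      rw [hrefl]
      exact mul_le_mul_of_nonneg_left (hgeom K) (by positivity)
    refine Asymptotics.IsBigO.of_bound
      (C₀ * (1 / (1 - q)) * ((B:ℝ) * ‖V‖) + C₀ * ‖V‖) ?_
    filter_upwards with K
    have h1 := hsup K
    have h2 := hsum_bound K
    have hBV : (0:ℝ) ≤ (B:ℝ) * ‖V‖ := mul_nonneg hBR.le (norm_nonneg _)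
    have h3 : (⨆ x : Set.Icc (0:ℝ) 1, ‖runSum A V K x‖) ≤
        (C₀ * lam ^ K * (1 / (1 - q))) * ((B:ℝ) * ‖V‖) + C₀ * lam ^ K * ‖V‖ :=
      le_trans h1 (add_le_add_left (mul_le_mul_of_nonneg_right h2 hBV) _)
    have hnorm1 : ‖⨆ x : Set.Icc (0:ℝ) 1, ‖runSum A V K x‖‖
        = (⨆ x : Set.Icc (0:ℝ) 1, ‖runSum A V K x‖) := Real.norm_of_nonneg (hsup0 K)
    have hnorm2 : ‖lam ^ K‖ = lam ^ K := Real.norm_of_nonneg (pow_nonneg hlam.le K)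
    rw [hnorm1, hnorm2]
    calc (⨆ x : Set.Icc (0:ℝ) 1, ‖runSum A V K x‖)
        ≤ (C₀ * lam ^ K * (1 / (1 - q))) * ((B:ℝ) * ‖V‖) + C₀ * lam ^ K * ‖V‖ := h3
      _ = (C₀ * (1 / (1 - q)) * ((B:ℝ) * ‖V‖) + C₀ * ‖V‖) * lam ^ K := by ring
  · intro heq
    subst heq
    refine Asymptotics.IsBigO.of_bound (C₀ * ((B:ℝ) * ‖V‖) + C₀ * ‖V‖) ?_
    filter_upwards [Filter.eventually_ge_atTop 1] with K hK
    have h1 := hsup K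
    have hterm : ∀ i ∈ Finset.range K, C₀ * ρ ^ (1 + i) * ρ ^ (K - 1 - i) = C₀ * ρ ^ K := by
      intro i hi
      have hiK : i < K := Finset.mem_range.mp hi
      have e : 1 + i + (K - 1 - i) = K := by omega
      rw [mul_assoc, ← pow_add, e]
    rw [Finset.sum_congr rfl hterm, Finset.sum_const, Finset.card_range, nsmul_eq_mul] at h1
    have hnorm1 : ‖⨆ x : Set.Icc (0:ℝ) 1, ‖runSum A V K x‖‖
        = (⨆ x : Set.Icc (0:ℝ) 1, ‖runSum A V K x‖) := Real.norm_of_nonneg (hsup0 K)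
    have hnorm2 : ‖(K:ℝ) * ρ ^ K‖ = (K:ℝ) * ρ ^ K := Real.norm_of_nonneg
      (mul_nonneg (Nat.cast_nonneg K) (pow_nonneg hρ0 K))
    rw [hnorm1, hnorm2]
    have hK1 : (1:ℝ) ≤ (K:ℝ) := by exact_mod_cast hK
    have hρK : (0:ℝ) ≤ ρ ^ K := pow_nonneg hρ0 K
    have h2 : C₀ * ρ ^ K * ‖V‖ ≤ (K:ℝ) * ρ ^ K * (C₀ * ‖V‖) := by
      have haux : 0 ≤ ((K:ℝ) - 1) * (ρ ^ K * (C₀ * ‖V‖)) :=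
        mul_nonneg (by linarith) (mul_nonneg hρK (mul_nonneg hC₀0 (norm_nonneg V)))
      nlinarith [haux]
    have hBV : (0:ℝ) ≤ (B:ℝ) * ‖V‖ := mul_nonneg hBR.le (norm_nonneg _)
    calc (⨆ x : Set.Icc (0:ℝ) 1, ‖runSum A V K x‖)
        ≤ (K:ℝ) * (C₀ * ρ ^ K) * ((B:ℝ) * ‖V‖) + C₀ * ρ ^ K * ‖V‖ := h1
      _ ≤ (K:ℝ) * (C₀ * ρ ^ K) * ((B:ℝ) * ‖V‖) + (K:ℝ) * ρ ^ K * (C₀ * ‖V‖) := by linarith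
      _ = (C₀ * ((B:ℝ) * ‖V‖) + C₀ * ‖V‖) * ((K:ℝ) * ρ ^ K) := by ring
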